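/- Let A ∈ ℝ^{n×n} be skew-symmetric with two identical rows i and j (and hence, by skew-symmetry, identical columns i and j). Let à ∈ ℝ^{(n−1)×(n−1)} be obtained from A by deleting row j and column j. Then rank(A) = rank(Ã), and the vector e_i − e_j lies in the kernel of A, so x_i / x_j is a conserved quantity of the replicator dynamics ẋ_k = x_k (e_k^T A x) on the positive orthant. -/

import Mathlib

open Matrix

open scoped BigOperators

lemma aux_rank_submatrix_le {l o m : Type*} [Fintype l] [Fintype o] [Fintype m]
    [DecidableEq m] (f : l → m) (g : o → m) (A : Matrix m m ℝ) :
    (A.submatrix f g).rank ≤ A.rank := by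
  have h : A.submatrix f g
      = (1 : Matrix m m ℝ).submatrix f id * A * (1 : Matrix m m ℝ).submatrix id g := by
    ext k l
    simp [Matrix.mul_apply, Matrix.one_apply, Finset.sum_ite_eq, Finset.sum_ite_eq']
  calc (A.submatrix f g).rank
      = ((1 : Matrix m m ℝ).submatrix f id * A * (1 : Matrix m m ℝ).submatrix id g).rank := by
        rw [h]
    _ ≤ ((1 : Matrix m m ℝ).submatrix f id * A).rank := Matrix.rank_mul_le_left _ _
    _ ≤ A.rank := Matrix.rank_mul_le_right _ _

theorem stmt_17 {n : ℕ} (A : Matrix (Fin n) (Fin n) ℝ) (hA : Aᵀ = -A)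
    (i j : Fin n) (hij : i ≠ j) (hrows : ∀ k, A i k = A j k)
    (x : ℝ → Fin n → ℝ)
    (hx : ∀ l, Differentiable ℝ fun t => x t l)
    (hpos : ∀ t l, 0 < x t l)
    (hode : ∀ t l, deriv (fun s => x s l) t = x t l * ∑ m, A l m * x t m) :
    A.rank = (A.submatrix (fun k : {k : Fin n // k ≠ j} => (k : Fin n))
                (fun k : {k : Fin n // k ≠ j} => (k : Fin n))).rank ∧
    A.mulVec (Pi.single i 1 - Pi.single j 1) = 0 ∧
    ∀ t, deriv (fun s => x s i / x s j) t = 0 := by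
  have hcols : ∀ k, A k i = A k j := by
    intro k
    have h1 : A k i = -A i k := by
      have := congrFun (congrFun hA i) k
      simpa [Matrix.transpose_apply] using this
    have h2 : A k j = -A j k := by
      have := congrFun (congrFun hA j) k
      simpa [Matrix.transpose_apply] using this
    rw [h1, h2, hrows k]
  refine ⟨?_, ?_, ?_⟩
  · -- rank equality
    set e : {k : Fin n // k ≠ j} → Fin n := fun k => (k : Fin n) with he
    set f : Fin n → {k : Fin n // k ≠ j} :=
      fun k => if h : k = j then ⟨i, hij⟩ else ⟨k, h⟩ with hf
    have hef_row : ∀ k l, A (e (f k)) l = A k l := by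
      intro k l
      by_cases hk : k = j
      · subst hk
        simp only [hf, he, dif_pos rfl]
        exact hrows l
      · simp only [hf, he, dif_neg hk]
    have hef_col : ∀ k l, A k (e (f l)) = A k l := by
      intro k l
      by_cases hl : l = j
      · subst hl
        simp only [hf, he, dif_pos rfl]
        exact hcols k
      · simp only [hf, he, dif_neg hl]
    have key : A = (A.submatrix e e).submatrix f f := by
      ext k l
      simp only [Matrix.submatrix_apply]
      rw [hef_row, hef_col]
    refine le_antisymm ?_ ?_
    · conv_lhs => rw [key]
      exact aux_rank_submatrix_le f f _
    · exact aux_rank_submatrix_le e e A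
  · -- kernel vector
    funext k
    rw [Matrix.mulVec_sub, Matrix.mulVec_single, Matrix.mulVec_single]
    simp [hcols k]
  · -- conserved quantity
    intro t
    have hdi : DifferentiableAt ℝ (fun s => x s i) t := (hx i) t
    have hdj : DifferentiableAt ℝ (fun s => x s j) t := (hx j) t
    have hjne : x t j ≠ 0 := (hpos t j).ne'
    rw [deriv_fun_div hdi hdj hjne, hode t i, hode t j]
    have hsum : ∑ m, A i m * x t m = ∑ m, A j m * x t m := by
      exact Finset.sum_congr rfl (fun m _ => by rw [hrows m])
    rw [hsum]
    ring
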